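/- Let a, b ∈ ℝ³ have all coordinates nonzero, and set F₀ = diag(a)·[a⊙b]_×·diag(b). Then: (1) F₀ has rank 2; (2) F₀·a = 0 and F₀ᵀ·b = 0; (3) eᵢᵀ·F₀·eᵢ = 0 for i = 1, 2, 3, and e₄ᵀ·F₀·e₄ = aᵀ·[a⊙b]_×·b = a₃(a₁−a₂)b₁b₂ + a₂(a₃−a₁)b₁b₃ + a₁(a₂−a₃)b₂b₃; (4) every real 3×3 matrix F with F·a = 0, Fᵀ·b = 0, and eᵢᵀ·F·eᵢ = 0 for i = 1, 2, 3 is a scalar multiple of F₀; consequently, there exists a real 3×3 matrix F of rank 2 with F·a = 0, Fᵀ·b = 0, and eᵢᵀ·F·eᵢ = 0 for i = 1, 2, 3, 4, if and only if a₃(a₁−a₂)b₁b₂ + a₂(a₃−a₁)b₁b₃ + a₁(a₂−a₃)b₂b₃ = 0. -/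
import Mathlib


open Matrix

/-- The 3×3 skew-symmetric matrix `[v]ₓ` of the cross product: `[v]ₓ · u = v × u`. -/
def crossMat (v : Fin 3 → ℝ) : Matrix (Fin 3) (Fin 3) ℝ :=
  !![0, -v 2, v 1; v 2, 0, -v 0; -v 1, v 0, 0]

/-- Theorem 21 part (1) (n = 4, standard position): with
`F₀ = diag(a)·[a⊙b]ₓ·diag(b)`, the matrix `F₀` is the essentially unique
matrix satisfying the first three incidence constraints with epipoles `a`, `b`;
a rank-2 fundamental matrix also satisfying the fourth constraint `e₄ᵀFe₄ = 0`
exists iff `aᵀ[a⊙b]ₓb = 0`. -/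
theorem standard_position_four_points_hypersurface
    (a b : Fin 3 → ℝ) (ha : ∀ i, a i ≠ 0) (hb : ∀ i, b i ≠ 0) :
    let F₀ : Matrix (Fin 3) (Fin 3) ℝ :=
      Matrix.diagonal a * crossMat (a * b) * Matrix.diagonal b
    F₀.rank = 2 ∧
    F₀.mulVec a = 0 ∧ F₀ᵀ.mulVec b = 0 ∧
    (∀ i : Fin 3, Pi.single i (1 : ℝ) ⬝ᵥ F₀.mulVec (Pi.single i (1 : ℝ)) = 0) ∧
    ((fun _ : Fin 3 => (1 : ℝ)) ⬝ᵥ F₀.mulVec (fun _ => (1 : ℝ))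
        = a ⬝ᵥ (crossMat (a * b)).mulVec b) ∧
    (a ⬝ᵥ (crossMat (a * b)).mulVec b
        = a 2 * (a 0 - a 1) * b 0 * b 1 + a 1 * (a 2 - a 0) * b 0 * b 2
            + a 0 * (a 1 - a 2) * b 1 * b 2) ∧
    (∀ F : Matrix (Fin 3) (Fin 3) ℝ,
        F.mulVec a = 0 → Fᵀ.mulVec b = 0 →
        (∀ i : Fin 3, Pi.single i (1 : ℝ) ⬝ᵥ F.mulVec (Pi.single i (1 : ℝ)) = 0) →
        ∃ c : ℝ, F = c • F₀) ∧
    ((∃ F : Matrix (Fin 3) (Fin 3) ℝ, F.rank = 2 ∧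
        F.mulVec a = 0 ∧ Fᵀ.mulVec b = 0 ∧
        (∀ i : Fin 3, Pi.single i (1 : ℝ) ⬝ᵥ F.mulVec (Pi.single i (1 : ℝ)) = 0) ∧
        (fun _ : Fin 3 => (1 : ℝ)) ⬝ᵥ F.mulVec (fun _ => (1 : ℝ)) = 0)
      ↔ a 2 * (a 0 - a 1) * b 0 * b 1 + a 1 * (a 2 - a 0) * b 0 * b 2
          + a 0 * (a 1 - a 2) * b 1 * b 2 = 0) := by
  intro F₀
  have ha0 := ha 0; have ha1 := ha 1; have ha2 := ha 2
  have hb0 := hb 0; have hb1 := hb 1; have hb2 := hb 2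
  -- part (2): F₀ a = 0
  have h2 : F₀.mulVec a = 0 := by
    funext i
    fin_cases i <;>
      simp [F₀, crossMat, Matrix.mulVec, Matrix.mul_apply, dotProduct,
        Fin.sum_univ_three, Matrix.diagonal] <;> ring
  -- part (2'): F₀ᵀ b = 0
  have h3 : F₀ᵀ.mulVec b = 0 := by
    funext i
    fin_cases i <;>
      simp [F₀, crossMat, Matrix.mulVec, Matrix.mul_apply, dotProduct,
        Fin.sum_univ_three, Matrix.diagonal, Matrix.transpose_apply] <;> ring
  -- kernel of F₀ is the span of a
  have hker : LinearMap.ker F₀.mulVecLin = Submodule.span ℝ {a} := by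
    ext u
    constructor
    · intro hu
      have hu' : F₀.mulVec u = 0 := hu
      have h0 := congrFun hu' 0
      have h1 := congrFun hu' 1
      have hh2 := congrFun hu' 2
      simp [F₀, crossMat, Matrix.mulVec, Matrix.mul_apply, dotProduct,
        Fin.sum_univ_three, Matrix.diagonal] at h0 h1 hh2
      rw [Submodule.mem_span_singleton]
      refine ⟨u 0 / a 0, ?_⟩
      have key1 : a 0 * u 1 = a 1 * u 0 := by
        have h : a 2 * b 1 * b 0 * (a 0 * u 1 - a 1 * u 0) = 0 := by
          linear_combination hh2
        rcases mul_eq_zero.mp h with h | h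
        · rcases mul_eq_zero.mp h with h | h
          · rcases mul_eq_zero.mp h with h | h
            · exact absurd h ha2
            · exact absurd h hb1
          · exact absurd h hb0
        · linarith
      have key2 : a 0 * u 2 = a 2 * u 0 := by
        have h : a 1 * b 2 * b 0 * (a 2 * u 0 - a 0 * u 2) = 0 := by
          linear_combination h1
        rcases mul_eq_zero.mp h with h | h
        · rcases mul_eq_zero.mp h with h | h
          · rcases mul_eq_zero.mp h with h | h
            · exact absurd h ha1
            · exact absurd h hb2
          · exact absurd h hb0
        · linarith
      funext i
      fin_cases i
      · show u 0 / a 0 * a 0 = u 0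
        field_simp
      · show u 0 / a 0 * a 1 = u 1
        field_simp
        linarith [key1]
      · show u 0 / a 0 * a 2 = u 2
        field_simp
        linarith [key2]
    · intro hu
      rw [Submodule.mem_span_singleton] at hu
      obtain ⟨c, rfl⟩ := hu
      have h : F₀.mulVec (c • a) = c • F₀.mulVec a := by
        rw [Matrix.mulVec_smul]
      simp [LinearMap.mem_ker, Matrix.mulVecLin_apply, h, h2]
  -- part (1): rank
  have hane : a ≠ 0 := fun h => ha 0 (by rw [h]; rfl)
  have h1 : F₀.rank = 2 := by
    have hrn := LinearMap.finrank_range_add_finrank_ker F₀.mulVecLin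
    rw [hker, finrank_span_singleton hane] at hrn
    have hdom : Module.finrank ℝ (Fin 3 → ℝ) = 3 := by simp
    rw [hdom] at hrn
    have h : F₀.rank = Module.finrank ℝ (LinearMap.range F₀.mulVecLin) := rfl
    omega
  -- part (3): diagonal entries vanish
  have h4 : ∀ i : Fin 3, Pi.single i (1 : ℝ) ⬝ᵥ F₀.mulVec (Pi.single i (1 : ℝ)) = 0 := by
    intro i
    fin_cases i <;>
      simp [F₀, crossMat, Matrix.mulVec, Matrix.mul_apply, dotProduct,
        Fin.sum_univ_three, Matrix.diagonal, Pi.single_apply]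
  -- part (5)
  have h5 : (fun _ : Fin 3 => (1 : ℝ)) ⬝ᵥ F₀.mulVec (fun _ => (1 : ℝ))
      = a ⬝ᵥ (crossMat (a * b)).mulVec b := by
    simp [F₀, crossMat, Matrix.mulVec, Matrix.mul_apply, dotProduct,
      Fin.sum_univ_three, Matrix.diagonal]
    ring
  -- part (6)
  have h6 : a ⬝ᵥ (crossMat (a * b)).mulVec b
      = a 2 * (a 0 - a 1) * b 0 * b 1 + a 1 * (a 2 - a 0) * b 0 * b 2
          + a 0 * (a 1 - a 2) * b 1 * b 2 := by
    simp [crossMat, Matrix.mulVec, dotProduct, Fin.sum_univ_three]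
    ring
  -- F₀ as an explicit matrix
  have hF0' : F₀ = !![0, -(a 0 * a 2 * b 2 * b 1), a 0 * a 1 * b 1 * b 2;
      a 1 * a 2 * b 2 * b 0, 0, -(a 1 * a 0 * b 0 * b 2);
      -(a 2 * a 1 * b 1 * b 0), a 2 * a 0 * b 0 * b 1, 0] := by
    ext i j
    fin_cases i <;> fin_cases j <;>
      simp [F₀, crossMat, Matrix.mul_apply, Matrix.diagonal, Fin.sum_univ_three,
        -mul_eq_mul_left_iff, -mul_eq_mul_right_iff] <;>
      ring
  have hD : a 0 * a 2 * b 1 * b 2 ≠ 0 :=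
    mul_ne_zero (mul_ne_zero (mul_ne_zero ha0 ha2) hb1) hb2
  -- part (7): essential uniqueness
  have h7 : ∀ F : Matrix (Fin 3) (Fin 3) ℝ,
      F.mulVec a = 0 → Fᵀ.mulVec b = 0 →
      (∀ i : Fin 3, Pi.single i (1 : ℝ) ⬝ᵥ F.mulVec (Pi.single i (1 : ℝ)) = 0) →
      ∃ c : ℝ, F = c • F₀ := by
    intro F hFa hFb hFd
    have d0 := hFd 0; have d1 := hFd 1; have d2 := hFd 2
    simp [Matrix.mulVec, dotProduct, Fin.sum_univ_three, Pi.single_apply] at d0 d1 d2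
    have r0 := congrFun hFa 0; have r1 := congrFun hFa 1; have r2 := congrFun hFa 2
    have c0 := congrFun hFb 0; have c1 := congrFun hFb 1; have c2 := congrFun hFb 2
    simp [Matrix.mulVec, dotProduct, Fin.sum_univ_three, Matrix.transpose_apply,
      d0, d1, d2] at r0 r1 r2 c0 c1 c2
    refine ⟨-(F 0 1) / (a 0 * a 2 * b 1 * b 2), ?_⟩
    rw [hF0']
    funext i j
    fin_cases i <;> fin_cases j
    · show F 0 0 = -F 0 1 / (a 0 * a 2 * b 1 * b 2) * 0
      rw [div_mul_eq_mul_div, eq_div_iff hD]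
      linear_combination (a 0 * a 2 * b 1 * b 2) * d0
    · show F 0 1 = -F 0 1 / (a 0 * a 2 * b 1 * b 2) * -(a 0 * a 2 * b 2 * b 1)
      rw [div_mul_eq_mul_div, eq_div_iff hD]
      ring
    · show F 0 2 = -F 0 1 / (a 0 * a 2 * b 1 * b 2) * (a 0 * a 1 * b 1 * b 2)
      rw [div_mul_eq_mul_div, eq_div_iff hD]
      linear_combination (a 0 * b 1 * b 2) * r0
    · show F 1 0 = -F 0 1 / (a 0 * a 2 * b 1 * b 2) * (a 1 * a 2 * b 2 * b 0)
      rw [div_mul_eq_mul_div, eq_div_iff hD]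
      linear_combination (a 0 * a 2 * b 2) * c0 - (a 2 * b 2 * b 2) * r2
        + (a 1 * a 2 * b 2) * c1
    · show F 1 1 = -F 0 1 / (a 0 * a 2 * b 1 * b 2) * 0
      rw [div_mul_eq_mul_div, eq_div_iff hD]
      linear_combination (a 0 * a 2 * b 1 * b 2) * d1
    · show F 1 2 = -F 0 1 / (a 0 * a 2 * b 1 * b 2) * -(a 1 * a 0 * b 0 * b 2)
      rw [div_mul_eq_mul_div, eq_div_iff hD]
      linear_combination (a 0 * a 2 * b 2) * c2 - (a 0 * b 0 * b 2) * r0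
    · show F 2 0 = -F 0 1 / (a 0 * a 2 * b 1 * b 2) * -(a 2 * a 1 * b 1 * b 0)
      rw [div_mul_eq_mul_div, eq_div_iff hD]
      linear_combination (a 2 * b 1 * b 2) * r2 - (a 1 * a 2 * b 1) * c1
    · show F 2 1 = -F 0 1 / (a 0 * a 2 * b 1 * b 2) * (a 2 * a 0 * b 0 * b 1)
      rw [div_mul_eq_mul_div, eq_div_iff hD]
      linear_combination (a 0 * a 2 * b 1) * c1
    · show F 2 2 = -F 0 1 / (a 0 * a 2 * b 1 * b 2) * 0
      rw [div_mul_eq_mul_div, eq_div_iff hD]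
      linear_combination (a 0 * a 2 * b 1 * b 2) * d2
  refine ⟨h1, h2, h3, h4, h5, h6, h7, ?_⟩
  constructor
  · rintro ⟨F, hr, hFa, hFb, hFd, hFe⟩
    obtain ⟨c, rfl⟩ := h7 F hFa hFb hFd
    have hc : c ≠ 0 := by
      rintro rfl
      rw [zero_smul, Matrix.rank_zero] at hr
      exact absurd hr (by norm_num)
    have hsm : (fun _ : Fin 3 => (1 : ℝ)) ⬝ᵥ (c • F₀).mulVec (fun _ => (1 : ℝ))
        = c * ((fun _ : Fin 3 => (1 : ℝ)) ⬝ᵥ F₀.mulVec (fun _ => (1 : ℝ))) := by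
      rw [Matrix.smul_mulVec, dotProduct_smul, smul_eq_mul]
    rw [hsm, h5, h6] at hFe
    rcases mul_eq_zero.mp hFe with h | h
    · exact absurd h hc
    · exact h
  · intro hpoly
    exact ⟨F₀, h1, h2, h3, h4, by rw [h5, h6]; exact hpoly⟩
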